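/- Let m ≥ n+2 and let J = (j_1, …, j_{n+2}) be n+2 distinct indices from {1, …, m}. Then: (i) B(0 J) = 0 (the Cayley–Menger determinant of n+2 points in ℝ^n vanishes); and (ii) for every x ∈ ℂ^n, B(0 ⋆ J) = Σ_{ν=1}^{n+2} B(0 ⋆ ∂_{j_ν} J ; 0 j_ν ∂_{j_ν} J) · f_{j_ν}(x). Equivalently, on the complement of the spheres one has the partial fraction expansion B(0⋆J)/∏_{j∈J} f_j(x) = Σ_{ν=1}^{n+2} B(0 ⋆ ∂_{j_ν} J ; 0 j_ν ∂_{j_ν} J)/∏_{j∈∂_{j_ν}J} f_j(x). -/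
import Mathlib


inductive CMIdx (m : ℕ) : Type
  | zero : CMIdx m
  | star : CMIdx m
  | pt : Fin m → CMIdx m

/-- Entry of the Cayley–Menger matrix with squared radii `rsq` and squared distances `ρsq`. -/
def cmEnt {m : ℕ} (rsq : Fin m → ℝ) (ρsq : Fin m → Fin m → ℝ) : CMIdx m → CMIdx m → ℝ
  | CMIdx.zero, CMIdx.zero => 0
  | CMIdx.zero, _ => 1
  | _, CMIdx.zero => 1
  | CMIdx.star, CMIdx.star => 0
  | CMIdx.star, CMIdx.pt j => rsq j
  | CMIdx.pt j, CMIdx.star => rsq j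
  | CMIdx.pt j, CMIdx.pt k => if j = k then 0 else ρsq j k

/-- Minor `B(rows ; cols)` of the Cayley–Menger matrix. -/
noncomputable def cmMinor {m : ℕ} (rsq : Fin m → ℝ) (ρsq : Fin m → Fin m → ℝ)
    (rows cols : List (CMIdx m)) : ℝ :=
  if h : rows.length = cols.length then
    Matrix.det (Matrix.of fun i j : Fin rows.length =>
      cmEnt rsq ρsq (rows.get i) (cols.get (Fin.cast h j)))
  else 0

/-- `r_j² = Q(α_j) − α_{j0}`. -/
def sphereRsq {n m : ℕ} (α : Fin m → Fin n → ℝ) (α0 : Fin m → ℝ) : Fin m → ℝ :=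
  fun j => (∑ ν, α j ν ^ 2) - α0 j

/-- `ρ_{jk}² = Q(α_j − α_k)`. -/
def sphereRhosq {n m : ℕ} (α : Fin m → Fin n → ℝ) : Fin m → Fin m → ℝ :=
  fun j k => ∑ ν, (α j ν - α k ν) ^ 2

/-- The complex quadric `f_j(x) = Q(x) + 2(α_j, x) + α_{j0}`. -/
noncomputable def sphereFun {n m : ℕ} (α : Fin m → Fin n → ℝ) (α0 : Fin m → ℝ)
    (j : Fin m) (x : Fin n → ℂ) : ℂ :=
  (∑ ν, x ν ^ 2) + 2 * (∑ ν, (α j ν : ℂ) * x ν) + (α0 j : ℂ)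

open Matrix

lemma det_rect_mul_eq_zero {R : Type*} [CommRing R] (K : ℕ)
    (U : Fin (K+1) → Fin K → R) (V : Fin K → Fin (K+1) → R) :
    Matrix.det (Matrix.of fun i j => ∑ k, U i k * V k j) = 0 := by
  have h : (Matrix.of fun i j => ∑ k, U i k * V k j) =
      (Matrix.of fun (i : Fin (K+1)) (k : Fin (K+1)) =>
        if h : (k:ℕ) < K then U i ⟨k, h⟩ else 0) *
      (Matrix.of fun (k : Fin (K+1)) (j : Fin (K+1)) =>
        if h : (k:ℕ) < K then V ⟨k, h⟩ j else 0) := by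
    ext i j
    simp only [Matrix.mul_apply, Matrix.of_apply]
    rw [Fin.sum_univ_castSucc]
    simp
  rw [h, Matrix.det_mul]
  have h2 : Matrix.det (Matrix.of fun (i : Fin (K+1)) (k : Fin (K+1)) =>
        if h : (k:ℕ) < K then U i ⟨k, h⟩ else 0) = 0 := by
    apply Matrix.det_eq_zero_of_column_eq_zero (Fin.last K)
    intro i; simp
  rw [h2, zero_mul]

lemma cons_ofFn {β : Type*} {k : ℕ} (a : β) (f : Fin k → β) :
    a :: List.ofFn f = List.ofFn (Fin.cons a f) := by
  rw [List.ofFn_succ]; simp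

lemma cmMinor_ofFn {m k : ℕ} (rsq : Fin m → ℝ) (ρsq : Fin m → Fin m → ℝ)
    (r c : Fin k → CMIdx m) :
    cmMinor rsq ρsq (List.ofFn r) (List.ofFn c) =
      Matrix.det (Matrix.of fun i j : Fin k => cmEnt rsq ρsq (r i) (c j)) := by
  rw [cmMinor]
  have h : (List.ofFn r).length = (List.ofFn c).length := by simp
  rw [dif_pos h]
  have e := Matrix.det_submatrix_equiv_self
    (finCongr (show (List.ofFn r).length = k by simp))
    (Matrix.of fun i j : Fin k => cmEnt rsq ρsq (r i) (c j))
  rw [← e]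
  congr 1
  ext i j
  simp [List.get_ofFn, Fin.cast]

lemma rhosq_expand {n m : ℕ} (α : Fin m → Fin n → ℝ) (j k : Fin m) :
    sphereRhosq α j k =
      (∑ ν, α j ν ^ 2) + (∑ ν, α k ν ^ 2) - 2 * ∑ ν, α j ν * α k ν := by
  have h : ∀ ν, (α j ν - α k ν) ^ 2
      = α j ν ^ 2 + α k ν ^ 2 - 2 * (α j ν * α k ν) := fun ν => by ring
  simp only [sphereRhosq, h, Finset.sum_sub_distrib, Finset.sum_add_distrib, ← Finset.mul_sum]

lemma cmEnt_pt_pt {n m : ℕ} (α : Fin m → Fin n → ℝ) (α0 : Fin m → ℝ) (j k : Fin m) :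
    cmEnt (sphereRsq α α0) (sphereRhosq α) (CMIdx.pt j) (CMIdx.pt k) =
      (∑ ν, α j ν ^ 2) + (∑ ν, α k ν ^ 2) - 2 * ∑ ν, α j ν * α k ν := by
  show (if j = k then (0:ℝ) else sphereRhosq α j k) = _
  split
  · next h =>
    subst h
    have : (∑ ν, α j ν * α j ν) = ∑ ν, α j ν ^ 2 :=
      Finset.sum_congr rfl fun ν _ => (sq (α j ν)) ▸ (pow_two (α j ν)).symm
    rw [this]; ring
  · exact rhosq_expand α j k

lemma part_i_det {n m : ℕ} (α : Fin m → Fin n → ℝ) (α0 : Fin m → ℝ)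
    (J : Fin (n+2) → Fin m) :
    Matrix.det (Matrix.of fun i j : Fin (n+2+1) =>
      cmEnt (sphereRsq α α0) (sphereRhosq α)
        ((Fin.cons CMIdx.zero fun t => CMIdx.pt (J t) : Fin (n+2+1) → CMIdx m) i)
        ((Fin.cons CMIdx.zero fun t => CMIdx.pt (J t) : Fin (n+2+1) → CMIdx m) j)) = 0 := by
  have hQ := fun t => (∑ ν, α (J t) ν ^ 2 : ℝ)
  set U : Fin (n+2+1) → Fin (n+2) → ℝ :=
    Fin.cons (Fin.cons 0 (Fin.cons 1 0))
      (fun t => Fin.cons 1 (Fin.cons (∑ ν, α (J t) ν ^ 2) (fun τ => -2 * α (J t) τ))) with hU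
  set W : Fin (n+2+1) → Fin (n+2) → ℝ :=
    Fin.cons (Fin.cons 1 (Fin.cons 0 0))
      (fun t => Fin.cons (∑ ν, α (J t) ν ^ 2) (Fin.cons 1 (fun τ => α (J t) τ))) with hW
  have key : (Matrix.of fun i j : Fin (n+2+1) =>
      cmEnt (sphereRsq α α0) (sphereRhosq α)
        ((Fin.cons CMIdx.zero fun t => CMIdx.pt (J t) : Fin (n+2+1) → CMIdx m) i)
        ((Fin.cons CMIdx.zero fun t => CMIdx.pt (J t) : Fin (n+2+1) → CMIdx m) j)) =
      (Matrix.of fun i j => ∑ k, U i k * (fun k j => W j k) k j) := by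
    ext i j
    refine Fin.cases ?_ (fun s => ?_) i <;> refine Fin.cases ?_ (fun t => ?_) j <;>
      simp [hU, hW, Fin.sum_univ_succ, cmEnt, cmEnt_pt_pt]
    · rw [show (if J s = J t then (0:ℝ) else sphereRhosq α (J s) (J t)) =
          cmEnt (sphereRsq α α0) (sphereRhosq α) (CMIdx.pt (J s)) (CMIdx.pt (J t)) from rfl,
        cmEnt_pt_pt]
      have h2 : (∑ τ, 2 * α (J s) τ * α (J t) τ) = 2 * ∑ τ, α (J s) τ * α (J t) τ := by
        rw [Finset.mul_sum]; exact Finset.sum_congr rfl fun _ _ => by ring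
      rw [h2]; ring
  rw [key]
  exact det_rect_mul_eq_zero (n+2) U _

lemma expand_col {n : ℕ} (E : Fin (n+4) → Fin (n+2+1) → ℂ) (g : Fin (n+4) → ℂ) :
    Matrix.det (Matrix.of fun i j : Fin (n+4) =>
      Fin.cases (g i) (fun k => E i k) j) =
    g 0 * Matrix.det (Matrix.of fun a b : Fin (n+2+1) => E (Fin.succ a) b)
    + (-1) * g 1 * Matrix.det (Matrix.of fun a b : Fin (n+2+1) =>
        E ((1 : Fin (n+4)).succAbove a) b)
    + ∑ k : Fin (n+2), (-1)^(k:ℕ) * g k.succ.succ *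
        Matrix.det (Matrix.of fun a b : Fin (n+2+1) => E (k.succ.succ.succAbove a) b) := by
  rw [Matrix.det_succ_column_zero]
  have hsub : ∀ i : Fin (n+4),
      (Matrix.of fun i j : Fin (n+4) => Fin.cases (g i) (fun k => E i k) j).submatrix
        i.succAbove Fin.succ = Matrix.of fun a b => E (i.succAbove a) b := by
    intro i; ext a b
    simp [Matrix.submatrix_apply]
  have hent : ∀ i : Fin (n+4),
      (Matrix.of fun i j : Fin (n+4) => Fin.cases (g i) (fun k => E i k) j) i 0 = g i := by
    intro i; simp
  simp only [hsub, hent]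
  rw [Fin.sum_univ_succ, Fin.sum_univ_succ]
  have hterm : ∀ k : Fin (n+2),
      (-1 : ℂ)^(((Fin.succ (Fin.succ k)) : Fin (n+4)):ℕ) * g (Fin.succ (Fin.succ k)) *
        Matrix.det (Matrix.of fun a b => E ((Fin.succ (Fin.succ k)).succAbove a) b)
      = (-1)^(k:ℕ) * g k.succ.succ *
        Matrix.det (Matrix.of fun a b : Fin (n+2+1) => E (k.succ.succ.succAbove a) b) := by
    intro k
    have hv : (((Fin.succ (Fin.succ k)) : Fin (n+4)):ℕ) = (k:ℕ)+2 := by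
      simp [Fin.val_succ]
    rw [hv, pow_add]
    norm_num
  rw [Finset.sum_congr rfl (fun k _ => hterm k)]
  simp [Fin.succAbove_zero, Fin.succ_zero_eq_one, add_assoc]

noncomputable def centCd {n m : ℕ} (α : Fin m → Fin n → ℝ) (α0 : Fin m → ℝ)
    (a b : CMIdx m) : ℂ :=
  ((cmEnt (sphereRsq α α0) (sphereRhosq α) a b : ℝ) : ℂ)

def R4d {n m : ℕ} (J : Fin (n+2) → Fin m) : Fin (n+4) → CMIdx m :=
  Fin.cons CMIdx.zero (Fin.cons CMIdx.star fun t => CMIdx.pt (J t))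

def C3d {n m : ℕ} (J : Fin (n+2) → Fin m) : Fin (n+2+1) → CMIdx m :=
  Fin.cons CMIdx.zero fun t => CMIdx.pt (J t)

noncomputable def xcold {n m : ℕ} (α : Fin m → Fin n → ℝ) (J : Fin (n+2) → Fin m)
    (x : Fin n → ℂ) : Fin (n+4) → ℂ :=
  Fin.cons 1 (Fin.cons 0 (fun t => (∑ ν, x ν ^ 2) + (∑ ν, ((α (J t) ν : ℂ)) ^ 2)
    + 2 * ∑ ν, (α (J t) ν : ℂ) * x ν))

noncomputable def Umat {n m : ℕ} (α : Fin m → Fin n → ℝ) (J : Fin (n+2) → Fin m) :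
    Fin (n+4) → Fin (n+3) → ℂ :=
  Fin.cons (Fin.cons 0 (Fin.cons 1 (Fin.cons 0 0)))
    (Fin.cons (Fin.cons 1 (Fin.cons 0 (Fin.cons (-1) 0)))
      (fun t => Fin.cons 1 (Fin.cons (∑ ν, ((α (J t) ν : ℂ)) ^ 2)
        (Fin.cons 0 (fun τ => -2 * (α (J t) τ : ℂ))))))

noncomputable def Wmat {n m : ℕ} (α : Fin m → Fin n → ℝ) (α0 : Fin m → ℝ)
    (J : Fin (n+2) → Fin m) (x : Fin n → ℂ) :
    Fin (n+4) → Fin (n+3) → ℂ :=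
  Fin.cons (Fin.cons (∑ ν, x ν ^ 2) (Fin.cons 1 (Fin.cons (∑ ν, x ν ^ 2) (fun τ => -(x τ)))))
    (Fin.cons (Fin.cons 1 (Fin.cons 0 (Fin.cons 0 0)))
      (fun t => Fin.cons (∑ ν, ((α (J t) ν : ℂ)) ^ 2)
        (Fin.cons 1 (Fin.cons ((α0 (J t) : ℝ) : ℂ) (fun τ => (α (J t) τ : ℂ))))))

section evals
variable {n m : ℕ} (α : Fin m → Fin n → ℝ) (α0 : Fin m → ℝ) (J : Fin (n+2) → Fin m)
  (x : Fin n → ℂ) (t : Fin (n+2)) (s : Fin (n+2+1))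

lemma R4d_zero : R4d J 0 = CMIdx.zero := rfl
lemma R4d_one : R4d J (Fin.succ 0) = CMIdx.star := rfl
lemma R4d_pt : R4d J (Fin.succ (Fin.succ t)) = CMIdx.pt (J t) := rfl
lemma C3d_zero : C3d J 0 = CMIdx.zero := rfl
lemma C3d_pt : C3d J (Fin.succ t) = CMIdx.pt (J t) := rfl
lemma xcold_zero : xcold α J x 0 = 1 := rfl
lemma xcold_one : xcold α J x (Fin.succ 0) = 0 := rfl
lemma xcold_pt : xcold α J x (Fin.succ (Fin.succ t)) =
    (∑ ν, x ν ^ 2) + (∑ ν, ((α (J t) ν : ℂ)) ^ 2) + 2 * ∑ ν, (α (J t) ν : ℂ) * x ν := rfl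

lemma sum_mul_cons3 {n : ℕ} (a b c : ℂ) (f : Fin n → ℂ) (a' b' c' : ℂ) (f' : Fin n → ℂ) :
    (∑ k : Fin (n+3), (Fin.cons a (Fin.cons b (Fin.cons c f)) : Fin (n+3) → ℂ) k *
      (Fin.cons a' (Fin.cons b' (Fin.cons c' f')) : Fin (n+3) → ℂ) k)
    = a*a' + b*b' + c*c' + ∑ τ, f τ * f' τ := by
  rw [Fin.sum_univ_succ, Fin.sum_univ_succ, Fin.sum_univ_succ]
  simp only [Fin.cons_zero, Fin.cons_succ]
  ring

lemma Umat_zero : Umat α J 0 = (Fin.cons 0 (Fin.cons 1 (Fin.cons 0 0)) : Fin (n+3) → ℂ) := rfl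
lemma Umat_one : Umat α J (Fin.succ 0) =
    (Fin.cons 1 (Fin.cons 0 (Fin.cons (-1) 0)) : Fin (n+3) → ℂ) := rfl
lemma Umat_pt : Umat α J (Fin.succ (Fin.succ t)) =
    (Fin.cons 1 (Fin.cons (∑ ν, ((α (J t) ν : ℂ)) ^ 2)
      (Fin.cons 0 (fun τ => -2 * (α (J t) τ : ℂ)))) : Fin (n+3) → ℂ) := rfl
lemma Wmat_zero : Wmat α α0 J x 0 =
    (Fin.cons (∑ ν, x ν ^ 2) (Fin.cons 1 (Fin.cons (∑ ν, x ν ^ 2) (fun τ => -(x τ))))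
      : Fin (n+3) → ℂ) := rfl
lemma Wmat_one : Wmat α α0 J x (Fin.succ 0) =
    (Fin.cons 1 (Fin.cons 0 (Fin.cons 0 0)) : Fin (n+3) → ℂ) := rfl
lemma Wmat_pt : Wmat α α0 J x (Fin.succ (Fin.succ t)) =
    (Fin.cons (∑ ν, ((α (J t) ν : ℂ)) ^ 2)
      (Fin.cons 1 (Fin.cons ((α0 (J t) : ℝ) : ℂ) (fun τ => (α (J t) τ : ℂ)))) : Fin (n+3) → ℂ) := rfl
end evals

lemma detXcol_zero {n m : ℕ} (α : Fin m → Fin n → ℝ) (α0 : Fin m → ℝ)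
    (J : Fin (n+2) → Fin m) (x : Fin n → ℂ) :
    Matrix.det (Matrix.of fun i j : Fin (n+4) =>
      (Fin.cases (xcold α J x i) (fun k => centCd α α0 (R4d J i) (C3d J k)) j : ℂ)) = 0 := by
  have hs2 : ∀ s t : Fin (n+2), (∑ τ, -2 * (α (J s) τ : ℂ) * (α (J t) τ : ℂ))
      = -2 * ∑ τ, (α (J s) τ : ℂ) * (α (J t) τ : ℂ) := by
    intro s t; rw [Finset.mul_sum]; exact Finset.sum_congr rfl fun _ _ => by ring
  have hs1 : ∀ s : Fin (n+2), (∑ τ, -2 * (α (J s) τ : ℂ) * -(x τ))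
      = 2 * ∑ τ, (α (J s) τ : ℂ) * x τ := by
    intro s; rw [Finset.mul_sum]; exact Finset.sum_congr rfl fun _ _ => by ring
  have key : (Matrix.of fun i j : Fin (n+4) =>
      (Fin.cases (xcold α J x i) (fun k => centCd α α0 (R4d J i) (C3d J k)) j : ℂ))
      = Matrix.of (fun i j => ∑ k : Fin (n+3),
          Umat α J i k * Wmat α α0 J x j k) := by
    ext i j
    simp only [Matrix.of_apply]
    refine Fin.cases ?_ (fun j' => ?_) j <;>
      [skip; refine Fin.cases ?_ (fun t => ?_) j'] <;>
      (refine Fin.cases ?_ (fun i' => ?_) i <;>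
        [skip; refine Fin.cases ?_ (fun s => ?_) i']) <;>
      simp only [Fin.cases_zero, Fin.cases_succ, R4d_zero, R4d_one, R4d_pt,
        C3d_zero, C3d_pt, xcold_zero, xcold_one, xcold_pt,
        Umat_zero, Umat_one, Umat_pt, Wmat_zero, Wmat_one, Wmat_pt, sum_mul_cons3,
        centCd]
    · -- (x̃, 0)
      simp
    · -- (x̃, ⋆)
      simp
    · -- (x̃, pt s)
      rw [hs1]; push_cast; ring
    · -- (0-col, 0)
      simp [cmEnt]
    · simp [cmEnt]
    · simp [cmEnt]
    · -- (pt-col t, row 0)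
      simp [cmEnt]
    · simp [cmEnt, sphereRsq]; push_cast; ring
    · rw [cmEnt_pt_pt]; push_cast; rw [hs2]; ring
  rw [key]
  exact det_rect_mul_eq_zero (n+3) _ _

section star
variable {n m : ℕ} (α : Fin m → Fin n → ℝ) (α0 : Fin m → ℝ) (J : Fin (n+2) → Fin m)
  (x : Fin n → ℂ) (t : Fin (n+2))

lemma R4d_one' : R4d J 1 = CMIdx.star := by rw [← Fin.succ_zero_eq_one]; rfl
lemma xcold_one' : xcold α J x 1 = 0 := by rw [← Fin.succ_zero_eq_one]; rfl
lemma centCd_zero_star : centCd α α0 CMIdx.zero CMIdx.star = 1 := by simp [centCd, cmEnt]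
lemma centCd_star_star : centCd α α0 CMIdx.star CMIdx.star = 0 := by simp [centCd, cmEnt]
lemma centCd_pt_star (j : Fin m) :
    centCd α α0 (CMIdx.pt j) CMIdx.star = ((sphereRsq α α0 j : ℝ) : ℂ) := by
  simp [centCd, cmEnt]

lemma xcold_pt_eq : xcold α J x (Fin.succ (Fin.succ t)) =
    sphereFun α α0 (J t) x + ((sphereRsq α α0 (J t) : ℝ) : ℂ) := by
  rw [xcold_pt, sphereFun, sphereRsq]
  push_cast
  ring

lemma detStarcol :
    Matrix.det (Matrix.of fun i j : Fin (n+4) =>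
      (Fin.cases (centCd α α0 (R4d J i) CMIdx.star)
        (fun k => centCd α α0 (R4d J i) (C3d J k)) j : ℂ))
    = - Matrix.det (Matrix.of fun i j : Fin (n+4) => centCd α α0 (R4d J i) (R4d J j)) := by
  have hM : (Matrix.of fun i j : Fin (n+4) =>
      (Fin.cases (centCd α α0 (R4d J i) CMIdx.star)
        (fun k => centCd α α0 (R4d J i) (C3d J k)) j : ℂ))
      = (Matrix.of fun i j : Fin (n+4) => centCd α α0 (R4d J i) (R4d J j)).submatrix
          id (Equiv.swap 0 1) := by
    ext i j
    simp only [Matrix.of_apply, Matrix.submatrix_apply, id]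
    refine Fin.cases ?_ (fun j' => ?_) j
    · rw [Fin.cases_zero, Equiv.swap_apply_left, R4d_one']
    · rw [Fin.cases_succ]
      refine Fin.cases ?_ (fun t => ?_) j'
      · rw [Fin.succ_zero_eq_one, Equiv.swap_apply_right]
        rfl
      · rw [Equiv.swap_apply_of_ne_of_ne (Fin.succ_ne_zero _) (Fin.succ_succ_ne_one _)]
        rfl
  rw [hM, Matrix.det_permute']
  have hsign : Equiv.Perm.sign (Equiv.swap (0 : Fin (n+4)) 1) = -1 :=
    Equiv.Perm.sign_swap (by simp)
  rw [hsign]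
  simp

lemma rhs_minor (ν : Fin (n+2)) :
    Matrix.det (Matrix.of fun a b : Fin (n+2+1) =>
      centCd α α0
        ((Fin.cons CMIdx.zero (Fin.cons CMIdx.star fun t => CMIdx.pt (J (ν.succAbove t)))
          : Fin (n+2+1) → CMIdx m) a)
        ((Fin.cons CMIdx.zero (Fin.cons (CMIdx.pt (J ν)) fun t => CMIdx.pt (J (ν.succAbove t)))
          : Fin (n+2+1) → CMIdx m) b))
    = (-1)^(ν:ℕ) * Matrix.det (Matrix.of fun a b : Fin (n+2+1) =>
        centCd α α0 (R4d J ((Fin.succ (Fin.succ ν)).succAbove a)) (C3d J b)) := by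
  set τ : Equiv.Perm (Fin (n+2+1)) :=
    Equiv.Perm.decomposeFin.symm (0, (Fin.cycleRange ν)⁻¹) with hτ
  have hM : (Matrix.of fun a b : Fin (n+2+1) =>
      centCd α α0
        ((Fin.cons CMIdx.zero (Fin.cons CMIdx.star fun t => CMIdx.pt (J (ν.succAbove t)))
          : Fin (n+2+1) → CMIdx m) a)
        ((Fin.cons CMIdx.zero (Fin.cons (CMIdx.pt (J ν)) fun t => CMIdx.pt (J (ν.succAbove t)))
          : Fin (n+2+1) → CMIdx m) b))
      = (Matrix.of fun a b : Fin (n+2+1) =>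
        centCd α α0 (R4d J ((Fin.succ (Fin.succ ν)).succAbove a)) (C3d J b)).submatrix id τ := by
    ext a b
    simp only [Matrix.of_apply, Matrix.submatrix_apply, id]
    have hrow : (Fin.cons CMIdx.zero (Fin.cons CMIdx.star fun t => CMIdx.pt (J (ν.succAbove t)))
        : Fin (n+2+1) → CMIdx m) a = R4d J ((Fin.succ (Fin.succ ν)).succAbove a) := by
      refine Fin.cases ?_ (fun a' => ?_) a
      · rw [Fin.cons_zero, Fin.succ_succAbove_zero, R4d_zero]
      · refine Fin.cases ?_ (fun t => ?_) a'
        · rw [Fin.cons_succ, Fin.cons_zero, Fin.succ_succAbove_succ, Fin.succ_succAbove_zero]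
          rfl
        · rw [Fin.cons_succ, Fin.cons_succ, Fin.succ_succAbove_succ, Fin.succ_succAbove_succ]
          rfl
    have hcol : (Fin.cons CMIdx.zero (Fin.cons (CMIdx.pt (J ν)) fun t => CMIdx.pt (J (ν.succAbove t)))
        : Fin (n+2+1) → CMIdx m) b = C3d J (τ b) := by
      refine Fin.cases ?_ (fun b' => ?_) b
      · rw [Fin.cons_zero, hτ, Equiv.Perm.decomposeFin_symm_apply_zero, C3d_zero]
      · rw [hτ, Equiv.Perm.decomposeFin_symm_apply_succ]
        refine Fin.cases ?_ (fun t => ?_) b'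
        · simp [C3d, Equiv.Perm.inv_def, Fin.cycleRange_symm_zero]
        · simp [C3d, Equiv.Perm.inv_def, Fin.cycleRange_symm_succ]
    rw [hrow, hcol]
  rw [hM, Matrix.det_permute', hτ]
  simp [Fin.sign_cycleRange]
end star

lemma part_ii_det {n m : ℕ} (α : Fin m → Fin n → ℝ) (α0 : Fin m → ℝ)
    (J : Fin (n+2) → Fin m) (x : Fin n → ℂ) :
    Matrix.det (Matrix.of fun i j : Fin (n+4) => centCd α α0 (R4d J i) (R4d J j))
    = ∑ ν : Fin (n+2),
        ((-1)^(ν:ℕ) * Matrix.det (Matrix.of fun a b : Fin (n+2+1) =>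
          centCd α α0 (R4d J ((Fin.succ (Fin.succ ν)).succAbove a)) (C3d J b))) *
        sphereFun α α0 (J ν) x := by
  have h1 := expand_col (fun i k => centCd α α0 (R4d J i) (C3d J k)) (xcold α J x)
  have h2 := expand_col (fun i k => centCd α α0 (R4d J i) (C3d J k))
      (fun i => centCd α α0 (R4d J i) CMIdx.star)
  rw [detXcol_zero α α0 J x] at h1
  rw [detStarcol α α0 J] at h2
  simp only [xcold_zero, xcold_one', xcold_pt_eq α α0 J x, R4d_zero, R4d_one', R4d_pt,
    centCd_zero_star, centCd_star_star, centCd_pt_star] at h1 h2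
  have h3 : Matrix.det (Matrix.of fun i j : Fin (n+4) =>
        centCd α α0 (R4d J i) (R4d J j))
      = ∑ ν : Fin (n+2),
        ((-1)^(ν:ℕ) * (sphereFun α α0 (J ν) x + ((sphereRsq α α0 (J ν) : ℝ) : ℂ)) *
          Matrix.det (Matrix.of fun a b : Fin (n+2+1) =>
            centCd α α0 (R4d J ((Fin.succ (Fin.succ ν)).succAbove a)) (C3d J b))
        - (-1)^(ν:ℕ) * ((sphereRsq α α0 (J ν) : ℝ) : ℂ) *
          Matrix.det (Matrix.of fun a b : Fin (n+2+1) =>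
            centCd α α0 (R4d J ((Fin.succ (Fin.succ ν)).succAbove a)) (C3d J b))) := by
    rw [Finset.sum_sub_distrib]
    linear_combination h1 - h2
  exact h3.trans (Finset.sum_congr rfl fun ν _ => by ring)

lemma cast_det_centC {k m n : ℕ} (α : Fin m → Fin n → ℝ) (α0 : Fin m → ℝ)
    (r c : Fin k → CMIdx m) :
    ((Matrix.det (Matrix.of fun i j : Fin k =>
        cmEnt (sphereRsq α α0) (sphereRhosq α) (r i) (c j)) : ℝ) : ℂ)
    = Matrix.det (Matrix.of fun i j : Fin k => centCd α α0 (r i) (c j)) := by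
  rw [show ((Matrix.det (Matrix.of fun i j : Fin k =>
        cmEnt (sphereRsq α α0) (sphereRhosq α) (r i) (c j)) : ℝ) : ℂ)
      = Complex.ofRealHom (Matrix.det (Matrix.of fun i j : Fin k =>
        cmEnt (sphereRsq α α0) (sphereRhosq α) (r i) (c j))) from rfl,
    RingHom.map_det]
  congr 1

/-- For `n+2` spheres in `ℂⁿ` (formula (48) of Aomoto–Machida):
(i) `B(0J) = 0`, and (ii) for every `x ∈ ℂⁿ`,
`B(0⋆J) = Σ_{ν=1}^{n+2} B(0 ⋆ ∂_{j_ν}J ; 0 j_ν ∂_{j_ν}J) · f_{j_ν}(x)`. -/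
theorem cm_partial_fraction_expansion (n m : ℕ) (hm : n + 2 ≤ m)
    (α : Fin m → Fin n → ℝ) (α0 : Fin m → ℝ)
    (J : Fin (n + 2) → Fin m) (hJ : Function.Injective J) :
    (cmMinor (sphereRsq α α0) (sphereRhosq α)
        (CMIdx.zero :: List.ofFn fun i => CMIdx.pt (J i))
        (CMIdx.zero :: List.ofFn fun i => CMIdx.pt (J i)) = 0) ∧
    (∀ x : Fin n → ℂ,
      (cmMinor (sphereRsq α α0) (sphereRhosq α)
          (CMIdx.zero :: CMIdx.star :: List.ofFn fun i => CMIdx.pt (J i))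
          (CMIdx.zero :: CMIdx.star :: List.ofFn fun i => CMIdx.pt (J i)) : ℂ) =
        ∑ ν : Fin (n + 2),
          (cmMinor (sphereRsq α α0) (sphereRhosq α)
              ([CMIdx.zero, CMIdx.star] ++
                List.ofFn fun t : Fin (n + 1) => CMIdx.pt (J (ν.succAbove t)))
              ([CMIdx.zero, CMIdx.pt (J ν)] ++
                List.ofFn fun t : Fin (n + 1) => CMIdx.pt (J (ν.succAbove t))) : ℂ) *
            sphereFun α α0 (J ν) x) := by
  constructor
  · rw [cons_ofFn, cmMinor_ofFn]
    exact part_i_det α α0 J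
  · intro x
    have hL : ((cmMinor (sphereRsq α α0) (sphereRhosq α)
          (CMIdx.zero :: CMIdx.star :: List.ofFn fun i => CMIdx.pt (J i))
          (CMIdx.zero :: CMIdx.star :: List.ofFn fun i => CMIdx.pt (J i)) : ℝ) : ℂ)
        = Matrix.det (Matrix.of fun i j : Fin (n+4) =>
            centCd α α0 (R4d J i) (R4d J j)) := by
      rw [cons_ofFn (CMIdx.star), cons_ofFn (CMIdx.zero), cmMinor_ofFn]
      exact cast_det_centC α α0 _ _
    have hR : ∀ ν : Fin (n+2),
        ((cmMinor (sphereRsq α α0) (sphereRhosq α)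
            ([CMIdx.zero, CMIdx.star] ++
              List.ofFn fun t : Fin (n + 1) => CMIdx.pt (J (ν.succAbove t)))
            ([CMIdx.zero, CMIdx.pt (J ν)] ++
              List.ofFn fun t : Fin (n + 1) => CMIdx.pt (J (ν.succAbove t))) : ℝ) : ℂ)
        = (-1)^(ν:ℕ) * Matrix.det (Matrix.of fun a b : Fin (n+2+1) =>
            centCd α α0 (R4d J ((Fin.succ (Fin.succ ν)).succAbove a)) (C3d J b)) := by
      intro ν
      have e1 : ([CMIdx.zero, CMIdx.star] ++
            List.ofFn fun t : Fin (n + 1) => CMIdx.pt (J (ν.succAbove t)))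
          = List.ofFn (Fin.cons CMIdx.zero
              (Fin.cons CMIdx.star fun t => CMIdx.pt (J (ν.succAbove t)))) := by
        rw [← cons_ofFn, ← cons_ofFn]
        rfl
      have e2 : ([CMIdx.zero, CMIdx.pt (J ν)] ++
            List.ofFn fun t : Fin (n + 1) => CMIdx.pt (J (ν.succAbove t)))
          = List.ofFn (Fin.cons CMIdx.zero
              (Fin.cons (CMIdx.pt (J ν)) fun t => CMIdx.pt (J (ν.succAbove t)))) := by
        rw [← cons_ofFn, ← cons_ofFn]
        rfl
      rw [e1, e2, cmMinor_ofFn, cast_det_centC]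
      exact rhs_minor α α0 J ν
    rw [hL, part_ii_det α α0 J x]
    exact Finset.sum_congr rfl fun ν _ => by rw [hR ν]
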